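/- The iterates x̂^{(ℓ)} of the modified coupled recursion satisfy, for every ℓ ≥ 0: (1) x̂^{(ℓ+1)} ⪯ x̂^{(ℓ)} componentwise; (2) x̂^{(ℓ)} ⪰ x^{(ℓ)} componentwise, where x^{(ℓ)} are the iterates of the coupled recursion; and (3) x̂^{(ℓ)} is componentwise non-decreasing in the spatial index, i.e. x̂_{i+1}^{(ℓ)} ≥ x̂_i^{(ℓ)} for all i ∈ [1:M−1]. -/

import Mathlib

open Set Filter

/-- The coupling matrix `A` of size `N × M` with `M = N + w − 1`. -/
noncomputable def Amat (w N : ℕ) (j : Fin N) (k : Fin (N + w - 1)) : ℝ :=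
  if (j : ℕ) ≤ (k : ℕ) ∧ (k : ℕ) < (j : ℕ) + w then (w : ℝ)⁻¹ else 0

/-- The coupled update `h(x) = Aᵀ f(A g(x))`. -/
noncomputable def coupledMap (w N : ℕ) (f g : ℝ → ℝ)
    (x : Fin (N + w - 1) → ℝ) : Fin (N + w - 1) → ℝ :=
  fun i => ∑ j : Fin N, Amat w N j i * f (∑ k, Amat w N j k * g (x k))

/-- The coupled recursion initialized at `x_max·1`. -/
noncomputable def coupledSeq (w N : ℕ) (f g : ℝ → ℝ) (xmax : ℝ) :
    ℕ → Fin (N + w - 1) → ℝ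
  | 0 => fun _ => xmax
  | ℓ + 1 => coupledMap w N f g (coupledSeq w N f g xmax ℓ)

/-- The saturation map `q`: positions (1-indexed) beyond `i₀ = ⌈M/2⌉` are replaced
by the value at position `i₀` (0-indexed `(M+1)/2 − 1`). -/
noncomputable def qmap (M : ℕ) (x : Fin M → ℝ) : Fin M → ℝ :=
  fun i => if _h : (M + 1) / 2 ≤ (i : ℕ)
    then x ⟨(M + 1) / 2 - 1, by have := i.isLt; omega⟩ else x i

/-- The modified coupled recursion `x̂^{(ℓ+1)} = q(h(x̂^{(ℓ)}))` initialized at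
`x_max·1`. -/
noncomputable def modSeq (w N : ℕ) (f g : ℝ → ℝ) (xmax : ℝ) :
    ℕ → Fin (N + w - 1) → ℝ
  | 0 => fun _ => xmax
  | ℓ + 1 => qmap _ (coupledMap w N f g (modSeq w N f g xmax ℓ))

/-! ### Auxiliary definitions and lemmas -/

/-- The inner averaged value `(A g(x))_j`. -/
noncomputable def Wfun (w N : ℕ) (g : ℝ → ℝ) (x : Fin (N + w - 1) → ℝ) (j : Fin N) : ℝ :=
  ∑ k, Amat w N j k * g (x k)

lemma coupledMap_eq (w N : ℕ) (f g : ℝ → ℝ) (x : Fin (N + w - 1) → ℝ) (i : Fin (N + w - 1)) :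
    coupledMap w N f g x i = ∑ j : Fin N, Amat w N j i * f (Wfun w N g x j) := rfl

lemma Amat_nonneg (w N : ℕ) (j : Fin N) (k : Fin (N + w - 1)) : 0 ≤ Amat w N j k := by
  unfold Amat; split_ifs
  · positivity
  · exact le_refl 0

lemma Amat_row_sum {w N : ℕ} (hw : 1 ≤ w) (j : Fin N) : ∑ k, Amat w N j k = 1 := by
  have hj := j.isLt
  have h1 := Fin.sum_univ_eq_sum_range
    (fun m => if (j : ℕ) ≤ m ∧ m < (j : ℕ) + w then (w : ℝ)⁻¹ else 0) (N + w - 1)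
  simp only [Amat]
  rw [h1, ← Finset.sum_filter]
  have h2 : Finset.filter (fun m => (j : ℕ) ≤ m ∧ m < (j : ℕ) + w) (Finset.range (N + w - 1))
      = Finset.Ico (j : ℕ) ((j : ℕ) + w) := by
    ext m
    simp only [Finset.mem_filter, Finset.mem_range, Finset.mem_Ico]
    omega
  rw [h2, Finset.sum_const, Nat.card_Ico, nsmul_eq_mul]
  have : ((j : ℕ) + w - (j : ℕ)) = w := by omega
  rw [this, mul_inv_cancel₀ (by exact_mod_cast (by omega : w ≠ 0))]

lemma Amat_col_sum_le {w N : ℕ} (hw : 1 ≤ w) (i : Fin (N + w - 1)) :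
    ∑ j, Amat w N j i ≤ 1 := by
  have h1 := Fin.sum_univ_eq_sum_range
    (fun m => if m ≤ (i : ℕ) ∧ (i : ℕ) < m + w then (w : ℝ)⁻¹ else 0) N
  simp only [Amat]
  rw [h1, ← Finset.sum_filter, Finset.sum_const, nsmul_eq_mul]
  have hsub : Finset.filter (fun m => m ≤ (i : ℕ) ∧ (i : ℕ) < m + w) (Finset.range N)
      ⊆ Finset.Ico ((i : ℕ) + 1 - w) ((i : ℕ) + 1) := by
    intro m hm
    simp only [Finset.mem_filter, Finset.mem_range] at hm
    simp only [Finset.mem_Ico]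
    omega
  have hcard : (Finset.filter (fun m => m ≤ (i : ℕ) ∧ (i : ℕ) < m + w) (Finset.range N)).card ≤ w := by
    refine le_trans (Finset.card_le_card hsub) ?_
    rw [Nat.card_Ico]; omega
  have hw0 : (0:ℝ) ≤ (w : ℝ)⁻¹ := by positivity
  calc ((Finset.filter _ (Finset.range N)).card : ℝ) * (w : ℝ)⁻¹
      ≤ (w : ℝ) * (w : ℝ)⁻¹ := by
        exact mul_le_mul_of_nonneg_right (by exact_mod_cast hcard) hw0
    _ = 1 := mul_inv_cancel₀ (by exact_mod_cast (by omega : w ≠ 0))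

lemma Wfun_mem {w N : ℕ} {xmax ymax : ℝ} {g : ℝ → ℝ}
    (hg_maps : Set.MapsTo g (Set.Icc 0 xmax) (Set.Icc 0 ymax)) (hw : 1 ≤ w)
    {x : Fin (N + w - 1) → ℝ} (hx : ∀ k, x k ∈ Set.Icc (0:ℝ) xmax) (j : Fin N) :
    Wfun w N g x j ∈ Set.Icc (0:ℝ) ymax := by
  constructor
  · exact Finset.sum_nonneg fun k _ => mul_nonneg (Amat_nonneg w N j k) (hg_maps (hx k)).1
  · calc ∑ k, Amat w N j k * g (x k)
        ≤ ∑ k, Amat w N j k * ymax :=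
          Finset.sum_le_sum fun k _ =>
            mul_le_mul_of_nonneg_left (hg_maps (hx k)).2 (Amat_nonneg w N j k)
      _ = ymax := by rw [← Finset.sum_mul, Amat_row_sum hw, one_mul]

lemma coupledMap_mem {w N : ℕ} {xmax ymax : ℝ} {f g : ℝ → ℝ}
    (hxmax : 0 ≤ xmax)
    (hf_maps : Set.MapsTo f (Set.Icc 0 ymax) (Set.Icc 0 xmax))
    (hg_maps : Set.MapsTo g (Set.Icc 0 xmax) (Set.Icc 0 ymax)) (hw : 1 ≤ w)
    {x : Fin (N + w - 1) → ℝ} (hx : ∀ k, x k ∈ Set.Icc (0:ℝ) xmax) (i : Fin (N + w - 1)) :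
    coupledMap w N f g x i ∈ Set.Icc (0:ℝ) xmax := by
  rw [coupledMap_eq]
  constructor
  · exact Finset.sum_nonneg fun j _ =>
      mul_nonneg (Amat_nonneg w N j i) (hf_maps (Wfun_mem hg_maps hw hx j)).1
  · calc ∑ j, Amat w N j i * f (Wfun w N g x j)
        ≤ ∑ j, Amat w N j i * xmax :=
          Finset.sum_le_sum fun j _ =>
            mul_le_mul_of_nonneg_left (hf_maps (Wfun_mem hg_maps hw hx j)).2 (Amat_nonneg w N j i)
      _ = (∑ j, Amat w N j i) * xmax := by rw [Finset.sum_mul]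
      _ ≤ 1 * xmax := mul_le_mul_of_nonneg_right (Amat_col_sum_le hw i) hxmax
      _ = xmax := one_mul xmax

lemma Wfun_ptmono {w N : ℕ} {xmax : ℝ} {g : ℝ → ℝ}
    (hg_mono : MonotoneOn g (Set.Icc 0 xmax))
    {x x' : Fin (N + w - 1) → ℝ} (hx : ∀ k, x k ∈ Set.Icc (0:ℝ) xmax)
    (hx' : ∀ k, x' k ∈ Set.Icc (0:ℝ) xmax) (hle : ∀ k, x k ≤ x' k) (j : Fin N) :
    Wfun w N g x j ≤ Wfun w N g x' j :=
  Finset.sum_le_sum fun k _ =>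
    mul_le_mul_of_nonneg_left (hg_mono (hx k) (hx' k) (hle k)) (Amat_nonneg w N j k)

lemma coupledMap_ptmono {w N : ℕ} {xmax ymax : ℝ} {f g : ℝ → ℝ}
    (hf_mono : MonotoneOn f (Set.Icc 0 ymax))
    (hg_maps : Set.MapsTo g (Set.Icc 0 xmax) (Set.Icc 0 ymax))
    (hg_mono : MonotoneOn g (Set.Icc 0 xmax)) (hw : 1 ≤ w)
    {x x' : Fin (N + w - 1) → ℝ} (hx : ∀ k, x k ∈ Set.Icc (0:ℝ) xmax)
    (hx' : ∀ k, x' k ∈ Set.Icc (0:ℝ) xmax) (hle : ∀ k, x k ≤ x' k) (i : Fin (N + w - 1)) :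
    coupledMap w N f g x i ≤ coupledMap w N f g x' i := by
  rw [coupledMap_eq, coupledMap_eq]
  refine Finset.sum_le_sum fun j _ => mul_le_mul_of_nonneg_left ?_ (Amat_nonneg w N j i)
  exact hf_mono (Wfun_mem hg_maps hw hx j) (Wfun_mem hg_maps hw hx' j)
    (Wfun_ptmono hg_mono hx hx' hle j)

lemma Wfun_succ_sub {w N : ℕ} {g : ℝ → ℝ} (hw : 1 ≤ w)
    (x : Fin (N + w - 1) → ℝ) (j : ℕ) (hj : j + 1 < N) :
    Wfun w N g x ⟨j + 1, hj⟩ - Wfun w N g x ⟨j, by omega⟩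
      = (w : ℝ)⁻¹ * (g (x ⟨j + w, by omega⟩) - g (x ⟨j, by omega⟩)) := by
  have hA : ∀ k : Fin (N + w - 1),
      Amat w N ⟨j + 1, hj⟩ k * g (x k) - Amat w N ⟨j, by omega⟩ k * g (x k)
      = (if k = (⟨j + w, by omega⟩ : Fin (N + w - 1)) then (w : ℝ)⁻¹ * g (x k) else 0)
        - (if k = (⟨j, by omega⟩ : Fin (N + w - 1)) then (w : ℝ)⁻¹ * g (x k) else 0) := by
    intro k
    have hk := k.isLt
    simp only [Amat, Fin.ext_iff]
    split_ifs <;> first | omega | ring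
  unfold Wfun
  rw [← Finset.sum_sub_distrib, Finset.sum_congr rfl (fun k _ => hA k),
    Finset.sum_sub_distrib, Finset.sum_ite_eq' Finset.univ, Finset.sum_ite_eq' Finset.univ]
  simp only [Finset.mem_univ, if_true]
  ring

/-- `z` extended by zero outside `[0, N)`. -/
noncomputable def zext (w N : ℕ) (f g : ℝ → ℝ) (x : Fin (N + w - 1) → ℝ) (m : ℕ) : ℝ :=
  if h : m < N then f (Wfun w N g x ⟨m, h⟩) else 0

lemma coupledMap_succ_sub {w N : ℕ} {f g : ℝ → ℝ} (hw : 1 ≤ w)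
    (x : Fin (N + w - 1) → ℝ) (i : ℕ) (hi : i + 1 < N + w - 1) :
    coupledMap w N f g x ⟨i + 1, hi⟩ - coupledMap w N f g x ⟨i, Nat.lt_of_succ_lt hi⟩
      = (w : ℝ)⁻¹ * zext w N f g x (i + 1)
        - (if w ≤ i + 1 then (w : ℝ)⁻¹ * zext w N f g x (i + 1 - w) else 0) := by
  have hA : ∀ j : Fin N,
      Amat w N j ⟨i + 1, hi⟩ * f (Wfun w N g x j)
        - Amat w N j ⟨i, Nat.lt_of_succ_lt hi⟩ * f (Wfun w N g x j)
      = (if (j : ℕ) = i + 1 then (w : ℝ)⁻¹ * f (Wfun w N g x j) else 0)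
        - (if (j : ℕ) + w = i + 1 then (w : ℝ)⁻¹ * f (Wfun w N g x j) else 0) := by
    intro j
    have hj := j.isLt
    simp only [Amat]
    split_ifs <;> first | omega | ring
  rw [coupledMap_eq, coupledMap_eq, ← Finset.sum_sub_distrib,
    Finset.sum_congr rfl (fun j _ => hA j), Finset.sum_sub_distrib]
  congr 1
  · by_cases h : i + 1 < N
    · rw [Finset.sum_eq_single_of_mem (⟨i + 1, h⟩ : Fin N) (Finset.mem_univ _)
        (fun j _ hj => if_neg (fun hc => hj (Fin.ext hc)))]
      rw [if_pos rfl, zext, dif_pos h]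
    · rw [zext, dif_neg h, mul_zero]
      exact Finset.sum_eq_zero fun j _ => if_neg (fun hc => h (by rw [← hc]; exact j.isLt))
  · by_cases h : w ≤ i + 1
    · have ht : i + 1 - w < N := by omega
      rw [if_pos h, Finset.sum_eq_single_of_mem (⟨i + 1 - w, ht⟩ : Fin N) (Finset.mem_univ _)
        (fun j _ hj => if_neg (fun hc => hj (Fin.ext (show (j:ℕ) = i + 1 - w by omega))))]
      rw [if_pos (show (i + 1 - w) + w = i + 1 by omega), zext, dif_pos ht]
    · rw [if_neg h]
      exact Finset.sum_eq_zero fun j _ => if_neg (by omega)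

lemma Wfun_idx_mono {w N : ℕ} {xmax : ℝ} {g : ℝ → ℝ}
    (hg_mono : MonotoneOn g (Set.Icc 0 xmax)) (hw : 1 ≤ w)
    {x : Fin (N + w - 1) → ℝ} (hx : ∀ k, x k ∈ Set.Icc (0:ℝ) xmax)
    (hmx : ∀ (a b : ℕ) (ha : a < N + w - 1) (hb : b < N + w - 1),
      a ≤ b → x ⟨a, ha⟩ ≤ x ⟨b, hb⟩) :
    ∀ (a b : ℕ) (ha : a < N) (hb : b < N), a ≤ b →
      Wfun w N g x ⟨a, ha⟩ ≤ Wfun w N g x ⟨b, hb⟩ := by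
  have key : ∀ (d a : ℕ) (h : a + d < N),
      Wfun w N g x ⟨a, by omega⟩ ≤ Wfun w N g x ⟨a + d, h⟩ := by
    intro d
    induction d with
    | zero => intro a h; exact le_of_eq rfl
    | succ d ih =>
      intro a h
      have h1 : a + d + 1 < N := by omega
      refine le_trans (ih a (by omega)) ?_
      have hsub := Wfun_succ_sub (g := g) hw x (a + d) h1
      have hgle : g (x ⟨a + d, by omega⟩) ≤ g (x ⟨a + d + w, by omega⟩) :=
        hg_mono (hx _) (hx _) (hmx _ _ _ _ (by omega))
      have hw0 : (0:ℝ) ≤ (w : ℝ)⁻¹ := by positivity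
      have := mul_nonneg hw0 (sub_nonneg.2 hgle)
      have : Wfun w N g x ⟨a + d + 1, h1⟩ - Wfun w N g x ⟨a + d, by omega⟩ ≥ 0 := by
        rw [hsub]; exact this
      show Wfun w N g x ⟨a + d, by omega⟩ ≤ Wfun w N g x ⟨a + d + 1, h1⟩
      linarith
  intro a b ha hb hab
  obtain ⟨d, rfl⟩ : ∃ d, b = a + d := ⟨b - a, by omega⟩
  exact key d a hb

lemma zext_nonneg {w N : ℕ} {xmax ymax : ℝ} {f g : ℝ → ℝ}
    (hf_maps : Set.MapsTo f (Set.Icc 0 ymax) (Set.Icc 0 xmax))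
    (hg_maps : Set.MapsTo g (Set.Icc 0 xmax) (Set.Icc 0 ymax)) (hw : 1 ≤ w)
    {x : Fin (N + w - 1) → ℝ} (hx : ∀ k, x k ∈ Set.Icc (0:ℝ) xmax) (m : ℕ) :
    0 ≤ zext w N f g x m := by
  unfold zext
  split_ifs with h
  · exact (hf_maps (Wfun_mem hg_maps hw hx _)).1
  · exact le_refl 0

/-- Key adjacent monotonicity: if `x` is spatially non-decreasing and in the box,
then `h(x)` is non-decreasing on the left half. -/
lemma coupledMap_adj_mono {w N : ℕ} {xmax ymax : ℝ} {f g : ℝ → ℝ}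
    (hf_maps : Set.MapsTo f (Set.Icc 0 ymax) (Set.Icc 0 xmax))
    (hf_mono : MonotoneOn f (Set.Icc 0 ymax))
    (hg_maps : Set.MapsTo g (Set.Icc 0 xmax) (Set.Icc 0 ymax))
    (hg_mono : MonotoneOn g (Set.Icc 0 xmax)) (hw : 1 ≤ w)
    {x : Fin (N + w - 1) → ℝ} (hx : ∀ k, x k ∈ Set.Icc (0:ℝ) xmax)
    (hmx : ∀ (a b : ℕ) (ha : a < N + w - 1) (hb : b < N + w - 1),
      a ≤ b → x ⟨a, ha⟩ ≤ x ⟨b, hb⟩)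
    (i : ℕ) (hi : 2 * i + 3 ≤ N + w - 1) :
    coupledMap w N f g x ⟨i, by omega⟩ ≤ coupledMap w N f g x ⟨i + 1, by omega⟩ := by
  have hi1 : i + 1 < N + w - 1 := by omega
  have hd := coupledMap_succ_sub (f := f) (g := g) hw x i hi1
  have hw0 : (0:ℝ) ≤ (w : ℝ)⁻¹ := by positivity
  by_cases h : w ≤ i + 1
  · have hN1 : i + 1 < N := by omega
    have ht : i + 1 - w < N := by omega
    have hW : Wfun w N g x ⟨i + 1 - w, ht⟩ ≤ Wfun w N g x ⟨i + 1, hN1⟩ :=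
      Wfun_idx_mono hg_mono hw hx hmx _ _ ht hN1 (by omega)
    have hfW : f (Wfun w N g x ⟨i + 1 - w, ht⟩) ≤ f (Wfun w N g x ⟨i + 1, hN1⟩) :=
      hf_mono (Wfun_mem hg_maps hw hx _) (Wfun_mem hg_maps hw hx _) hW
    have e1 : zext w N f g x (i + 1) = f (Wfun w N g x ⟨i + 1, hN1⟩) := dif_pos hN1
    have e2 : zext w N f g x (i + 1 - w) = f (Wfun w N g x ⟨i + 1 - w, ht⟩) := dif_pos ht
    rw [e1, e2, if_pos h] at hd
    have := mul_le_mul_of_nonneg_left hfW hw0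
    linarith
  · rw [if_neg h] at hd
    have := mul_nonneg hw0 (zext_nonneg hf_maps hg_maps hw hx (i + 1))
    linarith

lemma Amat_rev {w N : ℕ} (hw : 1 ≤ w) (j : Fin N) (k : Fin (N + w - 1)) :
    Amat w N j.rev k.rev = Amat w N j k := by
  have hj := j.isLt; have hk := k.isLt
  unfold Amat
  rw [Fin.val_rev, Fin.val_rev]
  refine if_congr ?_ rfl rfl
  omega

lemma Wfun_rev {w N : ℕ} {g : ℝ → ℝ} (hw : 1 ≤ w)
    {x : Fin (N + w - 1) → ℝ} (hs : ∀ k : Fin (N + w - 1), x k = x k.rev) (j : Fin N) :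
    Wfun w N g x j.rev = Wfun w N g x j := by
  unfold Wfun
  calc ∑ k, Amat w N j.rev k * g (x k)
      = ∑ k, Amat w N j.rev (Fin.revPerm k) * g (x (Fin.revPerm k)) :=
        (Equiv.sum_comp Fin.revPerm (fun k => Amat w N j.rev k * g (x k))).symm
    _ = ∑ k, Amat w N j k * g (x k) :=
        Finset.sum_congr rfl fun k _ => by
          show Amat w N j.rev k.rev * g (x k.rev) = _
          rw [Amat_rev hw, ← hs]

lemma coupledMap_rev {w N : ℕ} {f g : ℝ → ℝ} (hw : 1 ≤ w)
    {x : Fin (N + w - 1) → ℝ} (hs : ∀ k : Fin (N + w - 1), x k = x k.rev)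
    (i : Fin (N + w - 1)) :
    coupledMap w N f g x i.rev = coupledMap w N f g x i := by
  rw [coupledMap_eq, coupledMap_eq]
  calc ∑ j, Amat w N j i.rev * f (Wfun w N g x j)
      = ∑ j, Amat w N (Fin.revPerm j) i.rev * f (Wfun w N g x (Fin.revPerm j)) :=
        (Equiv.sum_comp Fin.revPerm (fun j => Amat w N j i.rev * f (Wfun w N g x j))).symm
    _ = ∑ j, Amat w N j i * f (Wfun w N g x j) :=
        Finset.sum_congr rfl fun j _ => by
          show Amat w N j.rev i.rev * f (Wfun w N g x j.rev) = _
          rw [Amat_rev hw, Wfun_rev hw hs]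

/-- **Lemma (mod_coupled_scalar_dec_inc).** The modified coupled recursion satisfies:
(i) `x̂^{(ℓ+1)} ⪯ x̂^{(ℓ)}`; (ii) `x̂^{(ℓ)} ⪰ x^{(ℓ)}`; and (iii) each `x̂^{(ℓ)}`
is non-decreasing in the spatial index. -/
theorem stmt_8
    (xmax ymax : ℝ) (hxmax : 0 < xmax) (hymax : 0 < ymax)
    (f g : ℝ → ℝ)
    (hf_maps : Set.MapsTo f (Set.Icc 0 ymax) (Set.Icc 0 xmax))
    (hf_mono : MonotoneOn f (Set.Icc 0 ymax))
    (hf_C1 : ContDiffOn ℝ 1 f (Set.Icc 0 ymax))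
    (hg_maps : Set.MapsTo g (Set.Icc 0 xmax) (Set.Icc 0 ymax))
    (hg_strict : StrictMonoOn g (Set.Icc 0 xmax))
    (hg_C2 : ContDiffOn ℝ 2 g (Set.Icc 0 xmax))
    (hg_top : g xmax = ymax)
    (w N : ℕ) (hw : 1 ≤ w) (hN : 1 ≤ N) :
    (∀ ℓ : ℕ, ∀ i, modSeq w N f g xmax (ℓ + 1) i ≤ modSeq w N f g xmax ℓ i)
    ∧ (∀ ℓ : ℕ, ∀ i, coupledSeq w N f g xmax ℓ i ≤ modSeq w N f g xmax ℓ i)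
    ∧ (∀ ℓ : ℕ, ∀ i : ℕ, ∀ (h1 : i + 1 < N + w - 1),
        modSeq w N f g xmax ℓ ⟨i, by omega⟩ ≤ modSeq w N f g xmax ℓ ⟨i + 1, h1⟩) := by
  have hg_mono : MonotoneOn g (Set.Icc 0 xmax) := hg_strict.monotoneOn
  have hM : 1 ≤ N + w - 1 := by omega
  have key : ∀ ℓ : ℕ,
      (∀ i, coupledSeq w N f g xmax ℓ i ∈ Set.Icc (0:ℝ) xmax)
      ∧ (∀ i, modSeq w N f g xmax ℓ i ∈ Set.Icc (0:ℝ) xmax)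
      ∧ (∀ i : Fin (N + w - 1),
          coupledSeq w N f g xmax ℓ i = coupledSeq w N f g xmax ℓ i.rev)
      ∧ (∀ a b : Fin (N + w - 1), (a : ℕ) ≤ (b : ℕ) →
          modSeq w N f g xmax ℓ a ≤ modSeq w N f g xmax ℓ b)
      ∧ (∀ i, coupledSeq w N f g xmax ℓ i ≤ modSeq w N f g xmax ℓ i) := by
    intro ℓ
    induction ℓ with
    | zero =>
      exact ⟨fun i => Set.mem_Icc.mpr ⟨hxmax.le, le_refl _⟩,
        fun i => Set.mem_Icc.mpr ⟨hxmax.le, le_refl _⟩, fun i => rfl,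
        fun a b _ => le_refl _, fun i => le_refl _⟩
    | succ ℓ ih =>
      obtain ⟨B1, B2, S, Mn, Le⟩ := ih
      have hmx : ∀ (a b : ℕ) (ha : a < N + w - 1) (hb : b < N + w - 1), a ≤ b →
          modSeq w N f g xmax ℓ ⟨a, ha⟩ ≤ modSeq w N f g xmax ℓ ⟨b, hb⟩ :=
        fun a b ha hb hab => Mn ⟨a, ha⟩ ⟨b, hb⟩ hab
      have ymono : ∀ (a b : ℕ) (ha : a < N + w - 1) (hb : b < N + w - 1),
          a ≤ b → 2 * b + 1 ≤ N + w - 1 →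
          coupledMap w N f g (modSeq w N f g xmax ℓ) ⟨a, ha⟩
            ≤ coupledMap w N f g (modSeq w N f g xmax ℓ) ⟨b, hb⟩ := by
        have step : ∀ (d a : ℕ) (h : a + d < N + w - 1), 2 * (a + d) + 1 ≤ N + w - 1 →
            coupledMap w N f g (modSeq w N f g xmax ℓ) ⟨a, by omega⟩
              ≤ coupledMap w N f g (modSeq w N f g xmax ℓ) ⟨a + d, h⟩ := by
          intro d
          induction d with
          | zero => intro a h _; exact le_of_eq rfl
          | succ d ihd =>
            intro a h hc
            refine le_trans (ihd a (by omega) (by omega)) ?_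
            exact coupledMap_adj_mono hf_maps hf_mono hg_maps hg_mono hw B2 hmx (a + d)
              (by omega)
        intro a b ha hb hab hc
        obtain ⟨d, rfl⟩ : ∃ d, b = a + d := ⟨b - a, by omega⟩
        exact step d a hb hc
      refine ⟨?_, ?_, ?_, ?_, ?_⟩
      · intro i
        exact coupledMap_mem hxmax.le hf_maps hg_maps hw B1 i
      · intro i
        show qmap _ (coupledMap w N f g (modSeq w N f g xmax ℓ)) i ∈ _
        simp only [qmap]
        split_ifs
        · exact coupledMap_mem hxmax.le hf_maps hg_maps hw B2 _
        · exact coupledMap_mem hxmax.le hf_maps hg_maps hw B2 _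
      · intro i
        exact (coupledMap_rev hw S i).symm
      · intro a b hab
        show qmap _ (coupledMap w N f g (modSeq w N f g xmax ℓ)) a
          ≤ qmap _ (coupledMap w N f g (modSeq w N f g xmax ℓ)) b
        simp only [qmap]
        split_ifs with h1 h2
        · exact le_refl _
        · exact absurd hab (by omega)
        · exact ymono _ _ a.isLt (by omega) (by omega) (by omega)
        · exact ymono _ _ a.isLt b.isLt hab (by omega)
      · intro i
        have hyle : ∀ k, coupledMap w N f g (coupledSeq w N f g xmax ℓ) k
            ≤ coupledMap w N f g (modSeq w N f g xmax ℓ) k :=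
          fun k => coupledMap_ptmono hf_mono hg_maps hg_mono hw B1 B2 Le k
        show coupledMap w N f g (coupledSeq w N f g xmax ℓ) i
          ≤ qmap _ (coupledMap w N f g (modSeq w N f g xmax ℓ)) i
        simp only [qmap]
        split_ifs with h
        · have hvr : (i.rev : ℕ) = N + w - 1 - 1 - (i : ℕ) := by rw [Fin.val_rev]; omega
          calc coupledMap w N f g (coupledSeq w N f g xmax ℓ) i
              = coupledMap w N f g (coupledSeq w N f g xmax ℓ) i.rev :=
                (coupledMap_rev hw S i).symm
            _ ≤ coupledMap w N f g (modSeq w N f g xmax ℓ) i.rev := hyle i.rev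
            _ ≤ coupledMap w N f g (modSeq w N f g xmax ℓ)
                  ⟨(N + w - 1 + 1) / 2 - 1, by omega⟩ :=
                ymono _ _ i.rev.isLt (by omega) (by omega) (by omega)
        · exact hyle i
  have dec : ∀ ℓ : ℕ, ∀ i, modSeq w N f g xmax (ℓ + 1) i ≤ modSeq w N f g xmax ℓ i := by
    intro ℓ
    induction ℓ with
    | zero =>
      intro i
      show qmap _ (coupledMap w N f g (modSeq w N f g xmax 0)) i ≤ xmax
      have hbox : ∀ k, modSeq w N f g xmax 0 k ∈ Set.Icc (0:ℝ) xmax :=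
        fun k => Set.mem_Icc.mpr ⟨hxmax.le, le_refl _⟩
      simp only [qmap]
      split_ifs
      · exact (coupledMap_mem hxmax.le hf_maps hg_maps hw hbox _).2
      · exact (coupledMap_mem hxmax.le hf_maps hg_maps hw hbox _).2
    | succ ℓ ihd =>
      intro i
      show qmap _ (coupledMap w N f g (modSeq w N f g xmax (ℓ + 1))) i
        ≤ qmap _ (coupledMap w N f g (modSeq w N f g xmax ℓ)) i
      simp only [qmap]
      split_ifs
      · exact coupledMap_ptmono hf_mono hg_maps hg_mono hw (key (ℓ + 1)).2.1 (key ℓ).2.1 ihd _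
      · exact coupledMap_ptmono hf_mono hg_maps hg_mono hw (key (ℓ + 1)).2.1 (key ℓ).2.1 ihd _
  exact ⟨dec, fun ℓ => (key ℓ).2.2.2.2,
    fun ℓ i h1 => (key ℓ).2.2.2.1 ⟨i, by omega⟩ ⟨i + 1, h1⟩ (Nat.le_succ i)⟩
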